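/- Let λ be a linear functional on the space Π(ℝ^d) of real polynomials in d variables that vanishes on all polynomials of degree < k. Then (−1)^k (λ⊗λ)(‖x−y‖^(2k)) ≥ 0, where λ⊗λ is applied to the polynomial (x,y) ↦ ‖x−y‖^(2k) regarded as an element of Π(ℝ^d)⊗Π(ℝ^d). -/

import Mathlib

open MvPolynomial Finset

noncomputable section

/-- The multi-index on the first (`x`) block of variables of a monomial in `Fin d ⊕ Fin d`. -/
def xpart {d : ℕ} (m : (Fin d ⊕ Fin d) →₀ ℕ) : Fin d →₀ ℕ :=
  Finsupp.equivFunOnFinite.symm fun i => m (Sum.inl i)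

/-- The multi-index on the second (`y`) block of variables. -/
def ypart {d : ℕ} (m : (Fin d ⊕ Fin d) →₀ ℕ) : Fin d →₀ ℕ :=
  Finsupp.equivFunOnFinite.symm fun i => m (Sum.inr i)

/-- `(l ⊗ m) f`: apply `l` in the `x`-variables and `m` in the `y`-variables of a
two-block polynomial `f`, via its canonical representation as a sum of products
of monomials in `x` and monomials in `y`. -/
def tensorApply {d : ℕ} (l m : Module.Dual ℝ (MvPolynomial (Fin d) ℝ))
    (f : MvPolynomial (Fin d ⊕ Fin d) ℝ) : ℝ :=
  ∑ mo ∈ f.support, f.coeff mo * l (monomial (xpart mo) 1) * m (monomial (ypart mo) 1)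

/-- Apply the linear functional `l` in the second (`y`) block of variables,
yielding a polynomial in the first (`x`) block of variables. -/
def applySecond {d : ℕ} (l : Module.Dual ℝ (MvPolynomial (Fin d) ℝ))
    (f : MvPolynomial (Fin d ⊕ Fin d) ℝ) : MvPolynomial (Fin d) ℝ :=
  ∑ mo ∈ f.support, monomial (xpart mo) (f.coeff mo * l (monomial (ypart mo) 1))

/-- The polynomial `(x,y) ↦ ‖x-y‖^(2k)` in the `2d` variables `x(1),…,x(d),y(1),…,y(d)`. -/
def distPoly (d k : ℕ) : MvPolynomial (Fin d ⊕ Fin d) ℝ :=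
  (∑ i : Fin d, (X (Sum.inl i) - X (Sum.inr i)) ^ 2) ^ k

/-- `l` vanishes on all polynomials of total degree `< k` (i.e. `l ⊥ Π_{<k}`). -/
def VanishesLT {d : ℕ} (l : Module.Dual ℝ (MvPolynomial (Fin d) ℝ)) (k : ℕ) : Prop :=
  ∀ p : MvPolynomial (Fin d) ℝ, p.totalDegree < k → l p = 0

/-- `l` vanishes on all polynomials of total degree `≤ k` (i.e. `l ⊥ Π_{≤k}`). -/
def VanishesLE {d : ℕ} (l : Module.Dual ℝ (MvPolynomial (Fin d) ℝ)) (k : ℕ) : Prop :=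
  ∀ p : MvPolynomial (Fin d) ℝ, p.totalDegree ≤ k → l p = 0

/-- `p_{a,β} : x ↦ ‖x‖^(2a) x^β` as a polynomial. -/
def pPoly (d : ℕ) (a : ℕ) (β : Fin d →₀ ℕ) : MvPolynomial (Fin d) ℝ :=
  (∑ i : Fin d, X i ^ 2) ^ a * monomial β 1

/-! ### Auxiliary machinery -/

section Aux

variable {d : ℕ}

lemma xpart_apply (m : (Fin d ⊕ Fin d) →₀ ℕ) (i : Fin d) : xpart m i = m (Sum.inl i) := rfl

lemma ypart_apply (m : (Fin d ⊕ Fin d) →₀ ℕ) (i : Fin d) : ypart m i = m (Sum.inr i) := rfl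

lemma tensorApply_eq_sum (l m : Module.Dual ℝ (MvPolynomial (Fin d) ℝ))
    (f : MvPolynomial (Fin d ⊕ Fin d) ℝ) :
    tensorApply l m f =
      (AddMonoidAlgebra.coeff f).sum (fun mo c => c * (l (monomial (xpart mo) 1) * m (monomial (ypart mo) 1))) := by
  rw [MvPolynomial.sum_def]
  unfold tensorApply
  exact Finset.sum_congr rfl (fun mo _ => by ring)

lemma tensorApply_add (l m : Module.Dual ℝ (MvPolynomial (Fin d) ℝ))
    (f g : MvPolynomial (Fin d ⊕ Fin d) ℝ) :
    tensorApply l m (f + g) = tensorApply l m f + tensorApply l m g := by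
  simp only [tensorApply_eq_sum]
  exact Finsupp.sum_add_index' (fun mo => by simp) (fun mo c₁ c₂ => by ring)

lemma tensorApply_zero (l m : Module.Dual ℝ (MvPolynomial (Fin d) ℝ)) :
    tensorApply l m 0 = 0 := by
  simp [tensorApply]

lemma tensorApply_sum (l m : Module.Dual ℝ (MvPolynomial (Fin d) ℝ))
    {ι : Type*} (s : Finset ι) (f : ι → MvPolynomial (Fin d ⊕ Fin d) ℝ) :
    tensorApply l m (∑ i ∈ s, f i) = ∑ i ∈ s, tensorApply l m (f i) := by
  classical
  induction s using Finset.induction with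
  | empty => simp [tensorApply_zero]
  | insert _ _ h ih => rw [Finset.sum_insert h, tensorApply_add, ih, Finset.sum_insert h]

lemma tensorApply_monomial (l m : Module.Dual ℝ (MvPolynomial (Fin d) ℝ))
    (mo : (Fin d ⊕ Fin d) →₀ ℕ) (c : ℝ) :
    tensorApply l m (monomial mo c)
      = c * (l (monomial (xpart mo) 1) * m (monomial (ypart mo) 1)) := by
  by_cases hc : c = 0
  · simp [hc, tensorApply_zero]
  · unfold tensorApply
    rw [support_monomial, if_neg hc, Finset.sum_singleton, coeff_monomial, if_pos rfl]
    ring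

lemma xpart_combine (α β : Fin d →₀ ℕ) :
    xpart (Finsupp.mapDomain Sum.inl α + Finsupp.mapDomain Sum.inr β) = α := by
  ext i
  rw [xpart_apply, Finsupp.add_apply, Finsupp.mapDomain_apply Sum.inl_injective,
    Finsupp.mapDomain_notin_range _ _ (by simp), add_zero]

lemma ypart_combine (α β : Fin d →₀ ℕ) :
    ypart (Finsupp.mapDomain Sum.inl α + Finsupp.mapDomain Sum.inr β) = β := by
  ext i
  rw [ypart_apply, Finsupp.add_apply, Finsupp.mapDomain_apply Sum.inr_injective,
    Finsupp.mapDomain_notin_range _ _ (by simp), zero_add]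

lemma apply_monomial (l : Module.Dual ℝ (MvPolynomial (Fin d) ℝ)) (α : Fin d →₀ ℕ) (c : ℝ) :
    l (monomial α c) = c * l (monomial α 1) := by
  have : (monomial α c : MvPolynomial (Fin d) ℝ) = c • monomial α 1 := by
    rw [smul_monomial, smul_eq_mul, mul_one]
  rw [this, map_smul, smul_eq_mul]

lemma mul_split (l m : Module.Dual ℝ (MvPolynomial (Fin d) ℝ))
    (p q : MvPolynomial (Fin d) ℝ) :
    tensorApply l m (rename Sum.inl p * rename Sum.inr q) = l p * m q := by
  conv_lhs => rw [p.as_sum, q.as_sum]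
  rw [map_sum, map_sum, Finset.sum_mul_sum, tensorApply_sum]
  conv_rhs => rw [p.as_sum, q.as_sum, map_sum, map_sum]
  rw [Finset.sum_mul_sum]
  apply Finset.sum_congr rfl
  intro α _
  rw [tensorApply_sum]
  apply Finset.sum_congr rfl
  intro β _
  rw [rename_monomial, rename_monomial, monomial_mul, tensorApply_monomial,
    xpart_combine, ypart_combine, apply_monomial l α (coeff α p),
    apply_monomial m β (coeff β q)]
  ring

/-- `‖x‖²` as a polynomial. -/
def Spoly (d : ℕ) : MvPolynomial (Fin d) ℝ := ∑ i : Fin d, X i ^ 2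

/-- The monomial `∏ⱼ x_{f j}`. -/
def mfPoly {d b : ℕ} (f : Fin b → Fin d) : MvPolynomial (Fin d) ℝ := ∏ j, X (f j)

lemma deg_term (a b : ℕ) (f : Fin b → Fin d) :
    (Spoly d ^ a * mfPoly f).totalDegree ≤ 2 * a + b := by
  refine le_trans (totalDegree_mul _ _) (add_le_add ?_ ?_)
  · refine le_trans (totalDegree_pow _ _) ?_
    have hS : (Spoly d).totalDegree ≤ 2 :=
      totalDegree_finsetSum_le (fun i _ => by simp [totalDegree_X_pow])
    calc a * (Spoly d).totalDegree ≤ a * 2 := Nat.mul_le_mul_left a hS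
      _ = 2 * a := by ring
  · refine le_trans (totalDegree_finset_prod _ _) ?_
    simp [totalDegree_X]

lemma Vpow (b : ℕ) :
    ((∑ i : Fin d, X (Sum.inl i) * X (Sum.inr i) : MvPolynomial (Fin d ⊕ Fin d) ℝ)) ^ b
      = ∑ f ∈ Fintype.piFinset (fun _ : Fin b => (univ : Finset (Fin d))),
          rename Sum.inl (mfPoly f) * rename Sum.inr (mfPoly f) := by
  rw [Finset.sum_pow']
  apply Finset.sum_congr rfl
  intro f _
  rw [mfPoly, map_prod, map_prod, ← Finset.prod_mul_distrib]
  simp [rename_X]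

lemma term_eval (l m : Module.Dual ℝ (MvPolynomial (Fin d) ℝ)) (a c b : ℕ) (r : ℝ) :
    tensorApply l m (C r * rename Sum.inl (Spoly d ^ a) * rename Sum.inr (Spoly d ^ c) *
        (∑ i : Fin d, X (Sum.inl i) * X (Sum.inr i)) ^ b)
      = ∑ f ∈ Fintype.piFinset (fun _ : Fin b => (univ : Finset (Fin d))),
          r * (l (Spoly d ^ a * mfPoly f) * m (Spoly d ^ c * mfPoly f)) := by
  rw [Vpow, Finset.mul_sum, tensorApply_sum]
  apply Finset.sum_congr rfl
  intro f _
  have hre : C r * rename Sum.inl (Spoly d ^ a) * rename Sum.inr (Spoly d ^ c) *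
        (rename Sum.inl (mfPoly f) * rename Sum.inr (mfPoly f))
      = rename Sum.inl (C r * (Spoly d ^ a * mfPoly f)) *
        rename Sum.inr (Spoly d ^ c * mfPoly f) := by
    simp only [map_mul, rename_C]
    ring
  rw [hre, mul_split, ← smul_eq_C_mul, map_smul, smul_eq_mul]
  ring

lemma dist_eq (d k : ℕ) :
    distPoly d k = (rename Sum.inl (Spoly d) + rename Sum.inr (Spoly d)
        + C (-2) * (∑ i : Fin d, X (Sum.inl i) * X (Sum.inr i))) ^ k := by
  unfold distPoly Spoly
  congr 1
  simp only [map_sum, map_pow, rename_X, Finset.mul_sum]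
  rw [← Finset.sum_add_distrib, ← Finset.sum_add_distrib]
  apply Finset.sum_congr rfl
  intro i _
  have : (C (-2) : MvPolynomial (Fin d ⊕ Fin d) ℝ) = -2 := by
    simp [map_neg, map_ofNat]
  rw [this]
  ring

end Aux

/-- If `λ ⊥ Π_{<k}` then `(−1)^k (λ⊗λ)‖x−y‖^(2k) ≥ 0`. -/
theorem tensor_sq_dist_nonneg (d k : ℕ) (l : Module.Dual ℝ (MvPolynomial (Fin d) ℝ))
    (h : VanishesLT l k) :
    0 ≤ (-1 : ℝ) ^ k * tensorApply l l (distPoly d k) := by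
  classical
  rw [dist_eq, add_pow, tensorApply_sum, Finset.mul_sum]
  apply Finset.sum_nonneg
  intro m hm
  have hmk : m ≤ k := by
    have := Finset.mem_range.mp hm; omega
  rw [add_pow, Finset.sum_mul, Finset.sum_mul, tensorApply_sum, Finset.mul_sum]
  apply Finset.sum_nonneg
  intro a ha
  have ham : a ≤ m := by
    have := Finset.mem_range.mp ha; omega
  set b := k - m with hb
  set c := m - a with hc
  have hpoly :
      rename Sum.inl (Spoly d) ^ a * rename Sum.inr (Spoly d) ^ c *
            ((m.choose a : ℕ) : MvPolynomial (Fin d ⊕ Fin d) ℝ) *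
          (C (-2) * (∑ i : Fin d, X (Sum.inl i) * X (Sum.inr i))) ^ b *
          ((k.choose m : ℕ) : MvPolynomial (Fin d ⊕ Fin d) ℝ)
        = C ((m.choose a : ℝ) * (-2) ^ b * (k.choose m : ℝ)) *
            rename Sum.inl (Spoly d ^ a) * rename Sum.inr (Spoly d ^ c) *
            (∑ i : Fin d, X (Sum.inl i) * X (Sum.inr i)) ^ b := by
    rw [C_mul, C_mul, C_pow, C_eq_coe_nat, C_eq_coe_nat, map_pow, map_pow, mul_pow]
    ring
  rw [hpoly, term_eval, Finset.mul_sum]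
  by_cases h1 : 2 * a + b < k
  · apply Finset.sum_nonneg
    intro f _
    rw [h _ (lt_of_le_of_lt (deg_term a b f) h1)]
    simp
  · by_cases h2 : 2 * c + b < k
    · apply Finset.sum_nonneg
      intro f _
      rw [h _ (lt_of_le_of_lt (deg_term c b f) h2)]
      simp
    · -- surviving term: a = c, k = 2a + b
      have hac : c = a := by omega
      have hk2 : k = 2 * a + b := by omega
      apply Finset.sum_nonneg
      intro f _
      rw [hac]
      have key : (-1 : ℝ) ^ k * (-2 : ℝ) ^ b = 2 ^ b := by
        rw [hk2, pow_add, pow_mul, neg_one_sq, one_pow, one_mul, ← mul_pow]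
        norm_num
      have : (-1 : ℝ) ^ k *
            ((m.choose a : ℝ) * (-2) ^ b * (k.choose m : ℝ) *
              (l (Spoly d ^ a * mfPoly f) * l (Spoly d ^ a * mfPoly f)))
          = ((m.choose a : ℝ) * (k.choose m : ℝ) * ((-1 : ℝ) ^ k * (-2 : ℝ) ^ b)) *
              l (Spoly d ^ a * mfPoly f) ^ 2 := by ring
      rw [this, key]
      positivity
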